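/- arXiv:2405.20941 — 4 statements merged into one kernel-verified Lean document; each statement's English description precedes it below -/
import Mathlib

section
/- Let g ≥ 1 and let τ be a complex symmetric g×g matrix whose imaginary part (the real matrix with entries Im τ_{ij}) is positive definite (a Siegel matrix). Then for every u ∈ ℂ^g the family over n ∈ ℤ^g of terms exp(2πi⟨u,n⟩)·exp(iπ⟨n,τn⟩) is absolutely summable, where ⟨u,n⟩ = Σ_i u_i n_i and ⟨n,τn⟩ = Σ_{i,j} n_i τ_{ij} n_j. In particular the Riemann theta function Θ(u,τ) = Σ_{n∈ℤ^g} exp(2πi⟨u,n⟩)·exp(iπ⟨n,τn⟩) is well defined for all u ∈ ℂ^g. -/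
private lemma aux_summable_pi_prod {g : ℕ} {h : ℤ → ℝ} (h0 : ∀ x, 0 ≤ h x) (hs : Summable h) :
    Summable (fun n : Fin g → ℤ => ∏ i, h (n i)) := by
  induction g with
  | zero => exact Summable.of_finite
  | succ k ih =>
      have H : Summable (fun p : ℤ × (Fin k → ℤ) => h p.1 * ∏ i, h (p.2 i)) :=
        Summable.mul_of_nonneg (f := h) (g := fun n : Fin k → ℤ => ∏ i, h (n i)) hs ih
          (Pi.le_def.mpr h0)
          (Pi.le_def.mpr fun n => Finset.prod_nonneg fun i _ => h0 _)
      rw [← (Fin.consEquiv fun _ : Fin (k+1) => ℤ).summable_iff]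
      simpa [Function.comp_def, Fin.prod_univ_succ, Fin.cons_zero, Fin.cons_succ] using H

private lemma aux_posdef_lower {g : ℕ} (hg : 1 ≤ g) (Y : Matrix (Fin g) (Fin g) ℝ)
    (hY : Y.PosDef) :
    ∃ c > 0, ∀ x : Fin g → ℝ, c * (∑ i, x i ^ 2) ≤ ∑ i, ∑ j, x i * Y i j * x j := by
  haveI : Nonempty (Fin g) := ⟨⟨0, hg⟩⟩
  set Q : (Fin g → ℝ) → ℝ := fun x => ∑ i, ∑ j, x i * Y i j * x j with hQ
  have hQx : ∀ x : Fin g → ℝ, x ≠ 0 → 0 < Q x := by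
    intro x hx
    have := hY.dotProduct_mulVec_pos hx
    simpa [dotProduct, Matrix.mulVec, Finset.mul_sum, mul_assoc, Q] using this
  have hQc : Continuous Q := by
    apply continuous_finset_sum
    intro i _
    apply continuous_finset_sum
    intro j _
    exact ((continuous_apply i).mul continuous_const).mul (continuous_apply j)
  obtain ⟨x₀, hx₀S, hx₀min⟩ :=
    (isCompact_sphere (0 : Fin g → ℝ) 1).exists_isMinOn
      (NormedSpace.sphere_nonempty.mpr zero_le_one) hQc.continuousOn
  have hx₀norm : ‖x₀‖ = 1 := by simpa using mem_sphere_zero_iff_norm.mp hx₀S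
  have hx₀ne : x₀ ≠ 0 := by
    intro h; rw [h] at hx₀norm; simp at hx₀norm
  have hc'pos : 0 < Q x₀ := hQx _ hx₀ne
  have hgpos : (0:ℝ) < g := by exact_mod_cast hg
  refine ⟨Q x₀ / g, div_pos hc'pos hgpos, fun x => ?_⟩
  rcases eq_or_ne x 0 with rfl | hx
  · simp
  have hxn : (0:ℝ) < ‖x‖ := norm_pos_iff.mpr hx
  have hy : ‖x‖⁻¹ • x ∈ Metric.sphere (0 : Fin g → ℝ) 1 := by
    simp [norm_smul, abs_of_pos (inv_pos.mpr hxn), inv_mul_cancel₀ hxn.ne']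
  have hmin := hx₀min hy
  have hscale : Q (‖x‖⁻¹ • x) = ‖x‖⁻¹ ^ 2 * Q x := by
    simp only [Q, Pi.smul_apply, smul_eq_mul, Finset.mul_sum]
    refine Finset.sum_congr rfl fun i _ => Finset.sum_congr rfl fun j _ => by ring
  have h1 : Q x₀ * ‖x‖ ^ 2 ≤ Q x := by
    have this2 : Q x₀ ≤ ‖x‖⁻¹ ^ 2 * Q x := hscale ▸ hmin
    have h2 : Q x₀ * ‖x‖ ^ 2 ≤ (‖x‖⁻¹ ^ 2 * Q x) * ‖x‖ ^ 2 :=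
      mul_le_mul_of_nonneg_right this2 (by positivity)
    calc Q x₀ * ‖x‖ ^ 2 ≤ (‖x‖⁻¹ ^ 2 * Q x) * ‖x‖ ^ 2 := h2
      _ = Q x := by field_simp
  have hsq : ∑ i, x i ^ 2 ≤ g * ‖x‖ ^ 2 := by
    have hb : ∀ i, x i ^ 2 ≤ ‖x‖ ^ 2 := fun i => by
      have h0 : |x i| ≤ ‖x‖ := by simpa using norm_le_pi_norm x i
      calc x i ^ 2 = |x i| ^ 2 := (sq_abs _).symm
        _ ≤ ‖x‖ ^ 2 := pow_le_pow_left₀ (abs_nonneg _) h0 2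
    calc ∑ i, x i ^ 2 ≤ ∑ _i : Fin g, ‖x‖ ^ 2 := Finset.sum_le_sum fun i _ => hb i
      _ = g * ‖x‖ ^ 2 := by simp [Finset.sum_const, nsmul_eq_mul]
  calc Q x₀ / g * (∑ i, x i ^ 2) ≤ Q x₀ / g * (g * ‖x‖ ^ 2) :=
        mul_le_mul_of_nonneg_left hsq (by positivity)
    _ = Q x₀ * ‖x‖ ^ 2 := by field_simp
    _ ≤ Q x := h1

/-- Absolute convergence of the Riemann theta series for a Siegel
matrix `τ` (symmetric with positive definite imaginary part): for every `u ∈ ℂ^g`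
the family `n ↦ exp(2πi⟨u,n⟩)·exp(iπ⟨n,τn⟩)`, `n ∈ ℤ^g`, is absolutely summable,
so the theta function `Θ(u,τ)` is well defined. -/
theorem riemann_theta_series_absolutely_summable
    (g : ℕ) (hg : 1 ≤ g) (τ : Matrix (Fin g) (Fin g) ℂ)
    (hsymm : τ.IsSymm)
    (hpos : (Matrix.of fun i j => (τ i j).im).PosDef) :
    ∀ u : Fin g → ℂ,
      Summable (fun n : Fin g → ℤ =>
        ‖Complex.exp (2 * Real.pi * Complex.I * ∑ i, u i * (n i : ℂ)) *
          Complex.exp (Real.pi * Complex.I *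
            ∑ i, ∑ j, (n i : ℂ) * τ i j * (n j : ℂ))‖) := by
  intro u
  obtain ⟨c, hc, hquad⟩ := aux_posdef_lower hg _ hpos
  set b : Fin g → ℝ := fun i => (u i).im with hb
  set K : ℝ := ‖b‖ with hK
  have hKnn : 0 ≤ K := norm_nonneg _
  set F : ℤ → ℝ := fun m => Real.exp (-Real.pi * (c * (m:ℝ)^2 - 2 * K * |(m:ℝ)|)) with hF
  have hFs : Summable F := by
    have := summable_pow_mul_jacobiTheta₂_term_bound K hc 0
    simpa [hF] using this
  refine Summable.of_nonneg_of_le (fun n => norm_nonneg _) (fun n => ?_)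
    (aux_summable_pi_prod (fun m => Real.exp_nonneg _) hFs)
  -- pointwise bound
  rw [← Complex.exp_add, Complex.norm_exp]
  have hre : (2 * (Real.pi:ℂ) * Complex.I * ∑ i, u i * (n i : ℂ) +
      (Real.pi:ℂ) * Complex.I * ∑ i, ∑ j, (n i : ℂ) * τ i j * (n j : ℂ)).re
      = -(2 * Real.pi * ∑ i, b i * (n i : ℝ))
        - Real.pi * ∑ i, ∑ j, (n i : ℝ) * (τ i j).im * (n j : ℝ) := by
    simp [Complex.add_re, Complex.mul_re, Complex.mul_im, Complex.im_sum, Complex.re_sum, hb]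
    ring
  rw [hre]
  have hprod : ∏ i, F (n i) =
      Real.exp (∑ i, -Real.pi * (c * ((n i : ℝ))^2 - 2 * K * |(n i : ℝ)|)) := by
    rw [Real.exp_sum]
  rw [hprod, Real.exp_le_exp]
  set x : Fin g → ℝ := fun i => ((n i : ℤ) : ℝ) with hx
  have l1 : ∑ i, (-(b i * x i)) ≤ ∑ i, K * |x i| := by
    refine Finset.sum_le_sum fun i _ => ?_
    calc -(b i * x i) ≤ |b i * x i| := neg_le_abs _
      _ = |b i| * |x i| := abs_mul _ _
      _ ≤ K * |x i| := by
          apply mul_le_mul_of_nonneg_right _ (abs_nonneg _)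
          simpa [Real.norm_eq_abs] using norm_le_pi_norm b i
  have l2 : c * (∑ i, x i ^ 2) ≤ ∑ i, ∑ j, x i * (τ i j).im * x j := by
    simpa using hquad x
  have l1' : -(∑ i, b i * x i) ≤ ∑ i, K * |x i| := by
    rw [← Finset.sum_neg_distrib]; exact l1
  have expand : ∑ i, -Real.pi * (c * (x i)^2 - 2 * K * |x i|)
      = Real.pi * (2 * (K * ∑ i, |x i|)) - Real.pi * (c * ∑ i, x i ^ 2) := by
    calc ∑ i, -Real.pi * (c * (x i)^2 - 2 * K * |x i|)
        = ∑ i, (Real.pi * (2 * (K * |x i|)) - Real.pi * (c * (x i ^ 2))) :=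
          Finset.sum_congr rfl fun i _ => by ring
      _ = Real.pi * (2 * (K * ∑ i, |x i|)) - Real.pi * (c * ∑ i, x i ^ 2) := by
          rw [Finset.sum_sub_distrib]
          simp only [← Finset.mul_sum]
  rw [expand]
  have l1'' : -∑ i, b i * x i ≤ K * ∑ i, |x i| := by
    rw [Finset.mul_sum]; exact l1'
  have m1 : Real.pi * (-∑ i, b i * x i) ≤ Real.pi * (K * ∑ i, |x i|) :=
    mul_le_mul_of_nonneg_left l1'' Real.pi_nonneg
  have m2 : Real.pi * (c * ∑ i, x i ^ 2) ≤
      Real.pi * (∑ i, ∑ j, x i * (τ i j).im * x j) :=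
    mul_le_mul_of_nonneg_left l2 Real.pi_nonneg
  nlinarith [m1, m2]
end

section
/- For every q, z ∈ ℂ with 0 < |q| < 1 and z ≠ 0, one has Σ_{n∈ℤ} z^n q^{n²} = Π_{n=1}^∞ (1 + z·q^{2n−1})·(1 + z^{−1}·q^{2n−1})·(1 − q^{2n}), where the series converges absolutely and the product converges. In particular, for τ in the upper half-plane, q = exp(iπτ) and z = exp(2πiu), this gives the product formula Θ(u,τ) = Π_{n≥1}(1+e^{2πiu}q^{2n−1})(1+e^{−2πiu}q^{2n−1})(1−q^{2n}) for the genus-one Riemann theta function Θ(u,τ) = Σ_{n∈ℤ} e^{2πinu} e^{iπτn²}. -/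
open Finset Filter Topology

namespace JTP



noncomputable def gB (t : ℂ) : ℕ → ℕ → ℂ
  | _, 0 => 1
  | 0, _+1 => 0
  | n+1, k+1 => gB t n (k+1) + t^(n-k) * gB t n k

def gC (t : ℂ) (n k : ℕ) : ℂ := ∏ i ∈ Finset.range k, (1 - t ^ (n - i))

def gD (t : ℂ) (k : ℕ) : ℂ := ∏ i ∈ Finset.range k, (1 - t ^ (i + 1))

lemma gB_zero_right (t : ℂ) (n : ℕ) : gB t n 0 = 1 := by
  cases n <;> rfl

lemma gB_zero_of_lt (t : ℂ) : ∀ n k, n < k → gB t n k = 0 := by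
  intro n
  induction n with
  | zero => intro k hk; match k, hk with
            | k+1, _ => rfl
  | succ n ih =>
    intro k hk
    match k, hk with
    | k+1, hk =>
      have h1 : n < k + 1 := by omega
      have h2 : n < k := by omega
      simp [gB, ih _ h1, ih _ h2]

lemma gC_eq_zero_of_lt (t : ℂ) {n k : ℕ} (h : n < k) : gC t n k = 0 := by
  refine Finset.prod_eq_zero (Finset.mem_range.2 h) ?_
  simp [Nat.sub_self]

lemma gB_mul_gD (t : ℂ) : ∀ n k, gB t n k * gD t k = gC t n k := by
  intro n
  induction n with
  | zero =>
    intro k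
    match k with
    | 0 => simp [gB, gC, gD]
    | k+1 =>
      have h : gB t 0 (k+1) = 0 := rfl
      rw [h, zero_mul, gC_eq_zero_of_lt t (Nat.succ_pos k)]
  | succ n ih =>
    intro k
    match k with
    | 0 => simp [gB_zero_right, gC, gD]
    | k+1 =>
      show (gB t n (k+1) + t^(n-k) * gB t n k) * gD t (k+1) = gC t (n+1) (k+1)
      have hD : gD t (k+1) = gD t k * (1 - t^(k+1)) := by
        simp [gD, Finset.prod_range_succ]
      by_cases hkn : k ≤ n
      · have e1 : gC t (n+1) (k+1) = (1 - t^(n+1)) * gC t n k := by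
          rw [gC, Finset.prod_range_succ']
          simp only [Nat.sub_zero]
          rw [mul_comm]
          congr 1
          apply Finset.prod_congr rfl
          intro i hi
          congr 2
          omega
        have e2 : gC t n (k+1) = gC t n k * (1 - t^(n-k)) := by
          rw [gC, Finset.prod_range_succ]; rfl
        have hpow : t^(n-k) * t^(k+1) = t^(n+1) := by
          rw [← pow_add]; congr 1; omega
        calc (gB t n (k+1) + t^(n-k) * gB t n k) * gD t (k+1)
            = gB t n (k+1) * gD t (k+1) + t^(n-k) * (gB t n k * gD t k) * (1 - t^(k+1)) := by
              rw [hD]; ring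
          _ = gC t n (k+1) + t^(n-k) * gC t n k * (1 - t^(k+1)) := by rw [ih, ih]
          _ = gC t (n+1) (k+1) := by
              rw [e1, e2]; linear_combination (- gC t n k) * hpow
      · push_neg at hkn
        have z1 : gB t n (k+1) = 0 := gB_zero_of_lt t _ _ (by omega)
        have z2 : gB t n k = 0 := gB_zero_of_lt t _ _ hkn
        rw [z1, z2, gC_eq_zero_of_lt t (show n+1 < k+1 by omega)]
        ring

lemma qbt (q z : ℂ) : ∀ n : ℕ,
    ∏ j ∈ Finset.range n, (1 + z * q ^ (2*j+1))
      = ∑ k ∈ Finset.range (n+1), q ^ (k^2) * gB (q^2) n k * z ^ k := by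
  intro n
  induction n with
  | zero => simp [gB]
  | succ n ih =>
    rw [Finset.prod_range_succ, ih]
    rw [Finset.sum_range_succ' (fun k => q ^ (k^2) * gB (q^2) (n+1) k * z ^ k) (n+1)]
    have step : ∀ k, gB (q^2) (n+1) (k+1) = gB (q^2) n (k+1) + (q^2)^(n-k) * gB (q^2) n k :=
      fun k => rfl
    have h0 : q ^ (0^2) * gB (q^2) (n+1) 0 * z ^ 0 = 1 := by
      rw [gB_zero_right]; simp
    have expand : ∑ k ∈ Finset.range (n+1), q ^ ((k+1)^2) * gB (q^2) (n+1) (k+1) * z ^ (k+1)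
        = (∑ k ∈ Finset.range (n+1), q ^ ((k+1)^2) * gB (q^2) n (k+1) * z ^ (k+1))
          + (∑ k ∈ Finset.range (n+1), q ^ ((k+1)^2) * ((q^2)^(n-k) * gB (q^2) n k) * z ^ (k+1)) := by
      rw [← Finset.sum_add_distrib]
      apply Finset.sum_congr rfl
      intro k _
      rw [step]; ring
    have first : (∑ k ∈ Finset.range (n+1), q ^ ((k+1)^2) * gB (q^2) n (k+1) * z ^ (k+1)) + 1
        = ∑ k ∈ Finset.range (n+1), q ^ (k^2) * gB (q^2) n k * z ^ k := by
      rw [Finset.sum_range_succ (fun k => q ^ ((k+1)^2) * gB (q^2) n (k+1) * z ^ (k+1)) n,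
        gB_zero_of_lt (q^2) n (n+1) (by omega),
        Finset.sum_range_succ' (fun k => q ^ (k^2) * gB (q^2) n k * z ^ k) n,
        gB_zero_right]
      simp
    have second : ∑ k ∈ Finset.range (n+1), q ^ ((k+1)^2) * ((q^2)^(n-k) * gB (q^2) n k) * z ^ (k+1)
        = z * q^(2*n+1) * ∑ k ∈ Finset.range (n+1), q ^ (k^2) * gB (q^2) n k * z ^ k := by
      rw [Finset.mul_sum]
      apply Finset.sum_congr rfl
      intro k hk
      have hk' : k ≤ n := by simpa using Nat.lt_succ_iff.mp (Finset.mem_range.mp hk)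
      have hpow : q ^ ((k+1)^2) * (q^2)^(n-k) = q ^ (k^2) * q^(2*n+1) := by
        rw [← pow_mul, ← pow_add, ← pow_add]
        congr 1
        have hsq : (k+1)^2 = k^2 + 2*k + 1 := by ring
        omega
      rw [pow_succ]
      calc q ^ ((k+1)^2) * ((q^2)^(n-k) * gB (q^2) n k) * (z ^ k * z)
          = (q ^ ((k+1)^2) * (q^2)^(n-k)) * gB (q^2) n k * (z ^ k * z) := by ring
        _ = (q ^ (k^2) * q^(2*n+1)) * gB (q^2) n k * (z ^ k * z) := by rw [hpow]
        _ = z * q^(2*n+1) * (q ^ (k^2) * gB (q^2) n k * z ^ k) := by ring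
    rw [expand, h0, add_right_comm, first, second]
    ring


lemma gD_def (t : ℂ) (k : ℕ) : gD t k = ∏ i ∈ Finset.range k, (1 - t ^ (i + 1)) := rfl

lemma sum_odd (N : ℕ) : ∑ j ∈ Finset.range N, (2*j+1) = N^2 := by
  induction N with
  | zero => simp
  | succ n ih => rw [Finset.sum_range_succ, ih]; ring

lemma reflect_step (q z : ℂ) (hq : q ≠ 0) (hz : z ≠ 0) {N j : ℕ} (hj' : j < N) :
    (1 + z / q^(2*N) * q^(2*j+1))
      = (z * q^(2*j+1) / q^(2*N)) * (1 + z⁻¹ * q^(2*(N-1-j)+1)) := by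
  have hpow : q^(2*j+1) * q^(2*(N-1-j)+1) = q^(2*N) := by
    rw [← pow_add]; congr 1; omega
  field_simp
  linear_combination -hpow

lemma main_finite (q z : ℂ) (hq : q ≠ 0) (hz : z ≠ 0) (N : ℕ) :
    ∏ j ∈ Finset.range N,
        ((1 + z * q ^ (2*j+1)) * (1 + z⁻¹ * q ^ (2*j+1)) * (1 - q ^ (2*(j+1))))
      = ∑ m ∈ Finset.Icc (-(N:ℤ)) (N:ℤ),
          (gD (q^2) N * gB (q^2) (2*N) (m + N).toNat) * q ^ (m^2) * z ^ m := by
  have hzN : z ^ N ≠ 0 := pow_ne_zero _ hz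
  have hqN2 : q ^ (N^2) ≠ 0 := pow_ne_zero _ hq
  have hq2N : q ^ (2*N) ≠ 0 := pow_ne_zero _ hq
  -- Step A : split off the (1 - q^{2(j+1)}) factors
  have stepA : ∏ j ∈ Finset.range N,
        ((1 + z * q ^ (2*j+1)) * (1 + z⁻¹ * q ^ (2*j+1)) * (1 - q ^ (2*(j+1))))
      = gD (q^2) N * ∏ j ∈ Finset.range N,
          ((1 + z * q ^ (2*j+1)) * (1 + z⁻¹ * q ^ (2*j+1))) := by
    rw [Finset.prod_mul_distrib, gD_def, mul_comm]
    congr 1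
    apply Finset.prod_congr rfl
    intro j _
    rw [← pow_mul]
  -- Step B : split the 2N-product
  have stepB : ∏ j ∈ Finset.range (2*N), (1 + z / q^(2*N) * q^(2*j+1))
      = (z^N / q^(N^2)) * ∏ j ∈ Finset.range N,
          ((1 + z * q ^ (2*j+1)) * (1 + z⁻¹ * q ^ (2*j+1))) := by
    set Q := q ^ (2*N) with hQ
    rw [two_mul, Finset.prod_range_add]
    have part2 : ∏ j ∈ Finset.range N, (1 + z / q^(2*N) * q^(2*(N+j)+1))
        = ∏ j ∈ Finset.range N, (1 + z * q^(2*j+1)) := by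
      apply Finset.prod_congr rfl
      intro j _
      congr 1
      have hpow : q^(2*(N+j)+1) = Q * q^(2*j+1) := by
        rw [hQ, ← pow_add]; congr 1; ring
      rw [hpow, hQ]
      field_simp
    have part1 : ∏ j ∈ Finset.range N, (1 + z / q^(2*N) * q^(2*j+1))
        = (z^N / q^(N^2)) * ∏ j ∈ Finset.range N, (1 + z⁻¹ * q^(2*j+1)) := by
      have step : ∀ j ∈ Finset.range N, (1 + z / q^(2*N) * q^(2*j+1))
          = (z * q^(2*j+1) / q^(2*N)) * (1 + z⁻¹ * q^(2*(N-1-j)+1)) :=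
        fun j hj => reflect_step q z hq hz (Finset.mem_range.mp hj)
      rw [Finset.prod_congr rfl step, Finset.prod_mul_distrib,
        Finset.prod_range_reflect (fun i => 1 + z⁻¹ * q^(2*i+1)) N]
      congr 1
      rw [Finset.prod_div_distrib, Finset.prod_mul_distrib, Finset.prod_const,
        Finset.prod_const, Finset.prod_pow_eq_pow_sum, sum_odd, Finset.card_range,
        ← pow_mul, show 2*N*N = N^2 + N^2 by ring, pow_add]
      field_simp
    rw [part1, part2, Finset.prod_mul_distrib]
    ring
  -- Step C : combine with the q-binomial theorem
  have key := qbt q (z / q^(2*N)) (2*N)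
  rw [stepB] at key
  have hP : ∏ j ∈ Finset.range N, ((1 + z * q ^ (2*j+1)) * (1 + z⁻¹ * q ^ (2*j+1)))
      = ∑ k ∈ Finset.range (2*N+1),
          (q^(N^2)/z^N) * (q^(k^2) * gB (q^2) (2*N) k * (z/q^(2*N))^k) := by
    rw [← Finset.mul_sum, ← key, ← mul_assoc, div_mul_div_comm,
      mul_comm (q^(N^2)) (z^N), div_self (mul_ne_zero hzN hqN2), one_mul]
  rw [stepA, hP, Finset.mul_sum]
  -- reindex and identify term by term
  refine Finset.sum_bij' (i := fun k _ => (k : ℤ) - N) (j := fun m _ => (m + N).toNat)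
    ?_ ?_ ?_ ?_ ?_
  · intro k hk
    have := Finset.mem_range.mp hk
    simp only [Finset.mem_Icc]
    omega
  · intro m hm
    have := Finset.mem_Icc.mp hm
    simp only [Finset.mem_range]
    omega
  · intro k hk
    have := Finset.mem_range.mp hk
    show ((k:ℤ) - N + N).toNat = k
    omega
  · intro m hm
    have := Finset.mem_Icc.mp hm
    show (((m + N).toNat : ℤ)) - N = m
    omega
  · intro k hk
    have hkr := Finset.mem_range.mp hk
    have htn : (((k : ℤ) - N) + N).toNat = k := by omega
    rw [htn]
    -- per-term computation
    have hzq : (z / q^(2*N))^k = z^k / q^(2*N*k) := by rw [div_pow, ← pow_mul]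
    have hzm : (z : ℂ) ^ ((k : ℤ) - N) = z^k / z^N := by
      rw [zpow_sub₀ hz, zpow_natCast, zpow_natCast]
    have hqm : (q : ℂ) ^ (((k : ℤ) - N)^2) = q^(k^2) * q^(N^2) / q^(2*N*k) := by
      rw [show ((k:ℤ) - N)^2 = ((k^2 : ℕ) : ℤ) + ((N^2 : ℕ) : ℤ) - ((2*N*k : ℕ) : ℤ) by
        push_cast; ring, zpow_sub₀ hq, zpow_add₀ hq, zpow_natCast, zpow_natCast, zpow_natCast]
    rw [hzq, hzm, hqm]
    have hq2Nk : q ^ (2*N*k) ≠ 0 := pow_ne_zero _ hq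
    field_simp



lemma prod_one_add_sub_one_norm {ι : Type*} (s : Finset ι) (g : ι → ℂ) :
    ‖∏ i ∈ s, (1 + g i) - 1‖ ≤ ∏ i ∈ s, (1 + ‖g i‖) - 1 := by
  classical
  induction s using Finset.cons_induction with
  | empty => simp
  | cons a s ha ih =>
    rw [Finset.prod_cons, Finset.prod_cons]
    have h1 : (1 + g a) * ∏ i ∈ s, (1 + g i) - 1
        = (1 + g a) * (∏ i ∈ s, (1 + g i) - 1) + g a := by ring
    have hQ : (1:ℝ) ≤ ∏ i ∈ s, (1 + ‖g i‖) := by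
      have := Finset.prod_le_prod (f := fun _ : ι => (1:ℝ)) (g := fun i => 1 + ‖g i‖)
        (s := s) (fun i _ => zero_le_one)
        (fun i _ => by simpa using le_add_of_nonneg_right (norm_nonneg (g i)))
      simpa using this
    calc ‖(1 + g a) * ∏ i ∈ s, (1 + g i) - 1‖
        = ‖(1 + g a) * (∏ i ∈ s, (1 + g i) - 1) + g a‖ := by rw [h1]
      _ ≤ ‖1 + g a‖ * ‖∏ i ∈ s, (1 + g i) - 1‖ + ‖g a‖ := by
          refine (norm_add_le _ _).trans ?_
          rw [norm_mul]
      _ ≤ (1 + ‖g a‖) * (∏ i ∈ s, (1 + ‖g i‖) - 1) + ‖g a‖ := by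
          have hn : ‖(1:ℂ) + g a‖ ≤ 1 + ‖g a‖ := (norm_add_le _ _).trans (by simp)
          have := norm_nonneg ((1:ℂ) + g a)
          have hpos : (0:ℝ) ≤ 1 + ‖g a‖ := by positivity
          nlinarith [ih, norm_nonneg (∏ i ∈ s, (1 + g i) - 1)]
      _ = (1 + ‖g a‖) * ∏ i ∈ s, (1 + ‖g i‖) - 1 := by ring

lemma prod_one_add_le_exp {ι : Type*} (s : Finset ι) (x : ι → ℝ) (hx : ∀ i ∈ s, 0 ≤ x i) :
    ∏ i ∈ s, (1 + x i) ≤ Real.exp (∑ i ∈ s, x i) := by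
  rw [Real.exp_sum]
  refine Finset.prod_le_prod (fun i hi => by linarith [hx i hi]) ?_
  intro i _
  linarith [Real.add_one_le_exp (x i)]

lemma geom_partial_le {u : ℝ} (h0 : 0 ≤ u) (h1 : u < 1) (n : ℕ) :
    ∑ i ∈ Finset.range n, u ^ i ≤ (1 - u)⁻¹ := by
  rw [← tsum_geometric_of_lt_one h0 h1]
  exact Summable.sum_le_tsum _ (fun i _ => by positivity) (summable_geometric_of_lt_one h0 h1)

lemma sum_pow_succ_le {t : ℂ} (ht : ‖t‖ < 1) (ht0 : 0 ≤ ‖t‖) (k : ℕ) :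
    ∑ i ∈ Finset.range k, ‖t‖ ^ (i + 1) ≤ ‖t‖ * (1 - ‖t‖)⁻¹ := by
  have : ∑ i ∈ Finset.range k, ‖t‖ ^ (i + 1) = ‖t‖ * ∑ i ∈ Finset.range k, ‖t‖ ^ i := by
    rw [Finset.mul_sum]
    exact Finset.sum_congr rfl fun i _ => by rw [pow_succ, mul_comm (‖t‖^i)]
  rw [this]
  exact mul_le_mul_of_nonneg_left (geom_partial_le ht0 ht k) ht0

lemma gD_norm_le {t : ℂ} (ht : ‖t‖ < 1) (k : ℕ) : ‖gD t k‖ ≤ Real.exp (‖t‖ * (1 - ‖t‖)⁻¹) := by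
  have ht0 : (0:ℝ) ≤ ‖t‖ := norm_nonneg t
  calc ‖gD t k‖ = ∏ i ∈ Finset.range k, ‖1 - t ^ (i+1)‖ := by
        rw [gD]; exact norm_prod _ _
    _ ≤ ∏ i ∈ Finset.range k, (1 + ‖t‖ ^ (i+1)) := by
        refine Finset.prod_le_prod (fun i _ => norm_nonneg _) ?_
        intro i _
        calc ‖1 - t ^ (i+1)‖ ≤ ‖(1:ℂ)‖ + ‖t ^ (i+1)‖ := norm_sub_le _ _
          _ = 1 + ‖t‖ ^ (i+1) := by rw [norm_one, norm_pow]
    _ ≤ Real.exp (∑ i ∈ Finset.range k, ‖t‖ ^ (i+1)) :=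
        prod_one_add_le_exp _ _ (fun i _ => by positivity)
    _ ≤ Real.exp (‖t‖ * (1 - ‖t‖)⁻¹) := Real.exp_le_exp.2 (sum_pow_succ_le ht ht0 k)

lemma gD_norm_ge {t : ℂ} (ht : ‖t‖ < 1) (k : ℕ) :
    Real.exp (-(‖t‖ * (1 - ‖t‖)⁻¹ * (1 - ‖t‖)⁻¹)) ≤ ‖gD t k‖ := by
  have ht0 : (0:ℝ) ≤ ‖t‖ := norm_nonneg t
  have h1u : (0:ℝ) < 1 - ‖t‖ := by linarith
  have hfac : ∀ i : ℕ, (0:ℝ) < 1 - ‖t‖ ^ (i+1) := by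
    intro i
    have : ‖t‖ ^ (i+1) ≤ ‖t‖ := pow_le_of_le_one ht0 (le_of_lt ht) (by omega)
    linarith
  have hlog : ∀ i : ℕ, -(‖t‖^(i+1) * (1 - ‖t‖)⁻¹) ≤ Real.log (1 - ‖t‖ ^ (i+1)) := by
    intro i
    have hx : ‖t‖ ^ (i+1) ≤ ‖t‖ := pow_le_of_le_one ht0 (le_of_lt ht) (by omega)
    have hpos := hfac i
    have hinv : Real.log ((1 - ‖t‖ ^ (i+1))⁻¹) ≤ (1 - ‖t‖ ^ (i+1))⁻¹ - 1 :=
      Real.log_le_sub_one_of_pos (by positivity)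
    rw [Real.log_inv] at hinv
    have he : (1 - ‖t‖ ^ (i+1))⁻¹ - 1 = ‖t‖^(i+1) / (1 - ‖t‖ ^ (i+1)) := by
      rw [eq_div_iff hpos.ne', sub_mul, inv_mul_cancel₀ hpos.ne', one_mul]
      ring
    rw [he] at hinv
    have hd : ‖t‖^(i+1) / (1 - ‖t‖ ^ (i+1)) ≤ ‖t‖^(i+1) * (1 - ‖t‖)⁻¹ := by
      rw [div_eq_mul_inv]
      refine mul_le_mul_of_nonneg_left ?_ (by positivity)
      exact inv_anti₀ h1u (by linarith)
    linarith
  calc Real.exp (-(‖t‖ * (1 - ‖t‖)⁻¹ * (1 - ‖t‖)⁻¹))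
      ≤ Real.exp (∑ i ∈ Finset.range k, Real.log (1 - ‖t‖ ^ (i+1))) := by
        refine Real.exp_le_exp.2
          (le_trans ?_ (Finset.sum_le_sum (fun i (_ : i ∈ Finset.range k) => hlog i)))
        rw [Finset.sum_neg_distrib, ← Finset.sum_mul, neg_le_neg_iff]
        exact mul_le_mul_of_nonneg_right (sum_pow_succ_le ht ht0 k) (by positivity)
    _ = ∏ i ∈ Finset.range k, (1 - ‖t‖ ^ (i+1)) := by
        rw [Real.exp_sum]
        exact Finset.prod_congr rfl (fun i _ => Real.exp_log (hfac i))
    _ ≤ ∏ i ∈ Finset.range k, ‖1 - t ^ (i+1)‖ := by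
        refine Finset.prod_le_prod (fun i _ => le_of_lt (hfac i)) ?_
        intro i _
        calc 1 - ‖t‖^(i+1) = ‖(1:ℂ)‖ - ‖t^(i+1)‖ := by rw [norm_one, norm_pow]
          _ ≤ ‖1 - t^(i+1)‖ := norm_sub_norm_le _ _
    _ = ‖gD t k‖ := by rw [gD, norm_prod]

lemma sum_pow_rev_le {t : ℂ} (ht : ‖t‖ < 1) {n k : ℕ} (hk : k ≤ n) :
    ∑ i ∈ Finset.range k, ‖t‖^(n-i) ≤ ‖t‖^(n-k+1) * (1-‖t‖)⁻¹ := by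
  have ht0 : (0:ℝ) ≤ ‖t‖ := norm_nonneg t
  have h := Finset.sum_range_reflect (fun i => ‖t‖^(n-i)) k
  rw [← h]
  have h2 : ∀ j ∈ Finset.range k, ‖t‖^(n-(k-1-j)) = ‖t‖^(n-k+1) * ‖t‖^j := by
    intro j hj
    have hj' := Finset.mem_range.mp hj
    rw [← pow_add]
    congr 1
    omega
  rw [Finset.sum_congr rfl h2, ← Finset.mul_sum]
  exact mul_le_mul_of_nonneg_left (geom_partial_le ht0 ht k) (by positivity)

lemma gC_norm_le {t : ℂ} (ht : ‖t‖ < 1) {n k : ℕ} (hk : k ≤ n) :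
    ‖gC t n k‖ ≤ Real.exp (‖t‖ * (1 - ‖t‖)⁻¹) := by
  have ht0 : (0:ℝ) ≤ ‖t‖ := norm_nonneg t
  calc ‖gC t n k‖ = ∏ i ∈ Finset.range k, ‖1 - t ^ (n-i)‖ := by rw [gC]; exact norm_prod _ _
    _ ≤ ∏ i ∈ Finset.range k, (1 + ‖t‖ ^ (n-i)) := by
        refine Finset.prod_le_prod (fun i _ => norm_nonneg _) ?_
        intro i _
        calc ‖1 - t ^ (n-i)‖ ≤ ‖(1:ℂ)‖ + ‖t ^ (n-i)‖ := norm_sub_le _ _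
          _ = 1 + ‖t‖ ^ (n-i) := by rw [norm_one, norm_pow]
    _ ≤ Real.exp (∑ i ∈ Finset.range k, ‖t‖ ^ (n-i)) :=
        prod_one_add_le_exp _ _ (fun i _ => by positivity)
    _ ≤ Real.exp (‖t‖ * (1 - ‖t‖)⁻¹) := by
        refine Real.exp_le_exp.2 ((sum_pow_rev_le ht hk).trans ?_)
        refine mul_le_mul_of_nonneg_right ?_ (inv_nonneg.2 (by linarith))
        exact pow_le_of_le_one ht0 ht.le (by omega)

lemma gC_sub_one_norm {t : ℂ} (ht : ‖t‖ < 1) {n k : ℕ} (hk : k ≤ n) :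
    ‖gC t n k - 1‖ ≤ Real.exp (‖t‖^(n-k+1) * (1 - ‖t‖)⁻¹) - 1 := by
  have hg : gC t n k = ∏ i ∈ Finset.range k, (1 + (-(t ^ (n-i)))) := by
    rw [gC]
    exact Finset.prod_congr rfl (fun i _ => by rw [sub_eq_add_neg])
  rw [hg]
  refine (prod_one_add_sub_one_norm _ _).trans ?_
  have hnn : ∏ i ∈ Finset.range k, (1 + ‖-(t ^ (n-i))‖)
      = ∏ i ∈ Finset.range k, (1 + ‖t‖^(n-i)) := by
    refine Finset.prod_congr rfl (fun i _ => by rw [norm_neg, norm_pow])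
  rw [hnn]
  have h1 : ∏ i ∈ Finset.range k, (1 + ‖t‖^(n-i))
      ≤ Real.exp (∑ i ∈ Finset.range k, ‖t‖ ^ (n-i)) :=
    prod_one_add_le_exp _ _ (fun i _ => by positivity)
  have h2 : Real.exp (∑ i ∈ Finset.range k, ‖t‖ ^ (n-i))
      ≤ Real.exp (‖t‖^(n-k+1) * (1 - ‖t‖)⁻¹) := Real.exp_le_exp.2 (sum_pow_rev_le ht hk)
  linarith

noncomputable def Kbd (t : ℂ) : ℝ :=
  Real.exp (‖t‖ * (1-‖t‖)⁻¹) * Real.exp (‖t‖ * (1-‖t‖)⁻¹)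
    * Real.exp (‖t‖ * (1-‖t‖)⁻¹ * (1-‖t‖)⁻¹)

lemma Kbd_nonneg (t : ℂ) : 0 ≤ Kbd t := by
  unfold Kbd
  positivity

lemma gD_ne_zero {t : ℂ} (ht : ‖t‖ < 1) (k : ℕ) : gD t k ≠ 0 := by
  have := gD_norm_ge ht k
  have h := Real.exp_pos (-(‖t‖ * (1 - ‖t‖)⁻¹ * (1 - ‖t‖)⁻¹))
  intro hc
  rw [hc, norm_zero] at this
  linarith

lemma coef_bound {t : ℂ} (ht : ‖t‖ < 1) {N k : ℕ} (hk : k ≤ 2*N) :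
    ‖gD t N * gB t (2*N) k‖ ≤ Kbd t := by
  have hDk := gD_ne_zero ht k
  have hB : gB t (2*N) k = gC t (2*N) k / gD t k := by
    field_simp [← gB_mul_gD t (2*N) k]
    exact gB_mul_gD t (2*N) k
  rw [hB, norm_mul, norm_div]
  have h1 := gD_norm_le ht N
  have h2 := gC_norm_le ht hk
  have h3 := gD_norm_ge ht k
  have h4 : ‖gD t k‖⁻¹ ≤ Real.exp (‖t‖ * (1-‖t‖)⁻¹ * (1-‖t‖)⁻¹) := by
    have h5 := inv_anti₀ (Real.exp_pos _) h3
    rwa [Real.exp_neg, inv_inv] at h5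
  rw [Kbd, div_eq_mul_inv]
  have hnn0 : (0:ℝ) ≤ ‖gD t N‖ := norm_nonneg _
  have hnn1 : (0:ℝ) ≤ ‖gC t (2*N) k‖ := norm_nonneg _
  have hnn2 : (0:ℝ) ≤ ‖gD t k‖⁻¹ := by positivity
  calc ‖gD t N‖ * (‖gC t (2*N) k‖ * ‖gD t k‖⁻¹)
      ≤ Real.exp (‖t‖ * (1-‖t‖)⁻¹) * (Real.exp (‖t‖ * (1-‖t‖)⁻¹)
          * Real.exp (‖t‖ * (1-‖t‖)⁻¹ * (1-‖t‖)⁻¹)) := by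
        have e1 : ‖gC t (2*N) k‖ * ‖gD t k‖⁻¹ ≤ Real.exp (‖t‖ * (1-‖t‖)⁻¹)
            * Real.exp (‖t‖ * (1-‖t‖)⁻¹ * (1-‖t‖)⁻¹) :=
          mul_le_mul h2 h4 hnn2 (Real.exp_pos _).le
        exact mul_le_mul h1 e1 (by positivity) (Real.exp_pos _).le
    _ = _ := by ring

lemma one_sub_pow_ne {t : ℂ} (ht : ‖t‖ < 1) (i : ℕ) : (1:ℂ) - t^(i+1) ≠ 0 := by
  have h : ‖t^(i+1)‖ < 1 := by
    rw [norm_pow]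
    calc ‖t‖^(i+1) ≤ ‖t‖ := pow_le_of_le_one (norm_nonneg t) ht.le (by omega)
      _ < 1 := ht
  intro hc
  have : t^(i+1) = 1 := by linear_combination -hc
  rw [this, norm_one] at h
  exact lt_irrefl _ h

lemma summable_pow_succ {t : ℂ} (ht : ‖t‖ < 1) :
    Summable (fun i : ℕ => ‖t‖ ^ (i+1)) := by
  have h := (summable_geometric_of_lt_one (norm_nonneg t) ht).mul_left ‖t‖
  refine h.congr (fun i => ?_)
  rw [pow_succ, mul_comm]

lemma summable_log_one_sub {t : ℂ} (ht : ‖t‖ < 1) :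
    Summable (fun i : ℕ => Complex.log (1 - t^(i+1))) := by
  refine Summable.of_norm_bounded_eventually (g := fun i => (3/2 : ℝ) * ‖t‖^(i+1))
    ((summable_pow_succ ht).mul_left _) ?_
  rw [Nat.cofinite_eq_atTop]
  have htend : Tendsto (fun i : ℕ => ‖t‖^(i+1)) atTop (𝓝 0) := by
    have h := (tendsto_pow_atTop_nhds_zero_of_lt_one (norm_nonneg t) ht).comp
      (tendsto_atTop_atTop.2 (fun b => ⟨b, fun a ha => by omega⟩) :
        Tendsto (fun i : ℕ => i + 1) atTop atTop)
    exact h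
  filter_upwards [htend.eventually_le_const (by norm_num : (0:ℝ) < 1/2)] with i hi
  have hhalf : ‖-(t^(i+1))‖ ≤ 1/2 := by rwa [norm_neg, norm_pow]
  have := Complex.norm_log_one_add_half_le_self hhalf
  rw [← sub_eq_add_neg] at this
  refine this.trans ?_
  rw [norm_neg, norm_pow]

lemma coef_tendsto {t : ℂ} (ht : ‖t‖ < 1) (m : ℤ) :
    Tendsto (fun N : ℕ => gD t N * gB t (2*N) ((m + (N:ℤ)).toNat)) atTop (𝓝 1) := by
  have hgD_ne : ∀ k, gD t k ≠ 0 :=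
    fun k => Finset.prod_ne_zero_iff.mpr (fun i _ => one_sub_pow_ne ht i)
  have hs := summable_log_one_sub ht
  have hD_eq : ∀ k, gD t k = Complex.exp (∑ i ∈ Finset.range k, Complex.log (1 - t^(i+1))) := by
    intro k
    rw [Complex.exp_sum]
    exact Finset.prod_congr rfl (fun i _ => (Complex.exp_log (one_sub_pow_ne ht i)).symm)
  set E := Complex.exp (∑' i : ℕ, Complex.log (1 - t^(i+1))) with hE_def
  have hDlim : Tendsto (fun k => gD t k) atTop (𝓝 E) := by
    have h := (Complex.continuous_exp.tendsto _).comp hs.hasSum.tendsto_sum_nat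
    exact Tendsto.congr (fun k => (hD_eq k).symm) h
  have hE : E ≠ 0 := Complex.exp_ne_zero _
  have hkt : Tendsto (fun N : ℕ => (m + (N:ℤ)).toNat) atTop atTop :=
    tendsto_atTop_atTop.2 (fun b => ⟨b + m.natAbs, fun a ha => by omega⟩)
  have hD2 : Tendsto (fun N : ℕ => gD t ((m + (N:ℤ)).toNat)) atTop (𝓝 E) := hDlim.comp hkt
  have hCnorm : ∀ᶠ N : ℕ in atTop, ‖gC t (2*N) ((m + (N:ℤ)).toNat) - 1‖
      ≤ Real.exp (‖t‖^(N + 1 - m.natAbs) * (1-‖t‖)⁻¹) - 1 := by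
    filter_upwards [eventually_ge_atTop m.natAbs] with N hN
    have hk2N : (m + (N:ℤ)).toNat ≤ 2*N := by omega
    refine (gC_sub_one_norm ht hk2N).trans ?_
    have hle : ‖t‖^(2*N - (m + (N:ℤ)).toNat + 1) ≤ ‖t‖^(N + 1 - m.natAbs) :=
      pow_le_pow_of_le_one (norm_nonneg t) ht.le (by omega)
    have h1u : (0:ℝ) ≤ (1-‖t‖)⁻¹ := inv_nonneg.2 (by linarith)
    have := mul_le_mul_of_nonneg_right hle h1u
    exact sub_le_sub_right (Real.exp_le_exp.2 this) 1
  have hbnd : Tendsto (fun N : ℕ => Real.exp (‖t‖^(N + 1 - m.natAbs) * (1-‖t‖)⁻¹) - 1)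
      atTop (𝓝 0) := by
    have h1 : Tendsto (fun N : ℕ => ‖t‖^(N + 1 - m.natAbs)) atTop (𝓝 0) :=
      (tendsto_pow_atTop_nhds_zero_of_lt_one (norm_nonneg t) ht).comp
        (tendsto_atTop_atTop.2 (fun b => ⟨b + m.natAbs, fun a ha => by omega⟩))
    have h2 := h1.mul_const ((1-‖t‖)⁻¹)
    rw [zero_mul] at h2
    have h3 := (Real.continuous_exp.tendsto 0).comp h2
    rw [Real.exp_zero] at h3
    have h4 := h3.sub_const 1
    simpa using h4
  have hC : Tendsto (fun N : ℕ => gC t (2*N) ((m + (N:ℤ)).toNat)) atTop (𝓝 1) := by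
    have h0 : Tendsto (fun N : ℕ => gC t (2*N) ((m + (N:ℤ)).toNat) - 1) atTop (𝓝 0) :=
      squeeze_zero_norm' hCnorm hbnd
    have := h0.add_const 1
    simpa using this
  have heq : ∀ N : ℕ, gD t N * gB t (2*N) ((m + (N:ℤ)).toNat)
      = gD t N * gC t (2*N) ((m + (N:ℤ)).toNat) / gD t ((m + (N:ℤ)).toNat) := by
    intro N
    rw [← gB_mul_gD t (2*N) ((m + (N:ℤ)).toNat), mul_div_assoc,
      mul_div_cancel_right₀ _ (hgD_ne _)]
  have hfin := (hDlim.mul hC).div hD2 hE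
  rw [mul_one, div_self hE] at hfin
  exact Tendsto.congr (fun N => (heq N).symm) hfin

lemma aux_summable {c r : ℝ} (hc : 0 < c) (hr0 : 0 < r) (hr1 : r < 1) :
    Summable (fun n : ℕ => c^n * r^(n^2)) := by
  refine summable_of_ratio_test_tendsto_lt_one one_pos ?_ ?_
  · filter_upwards with n
    positivity
  · have hre : ∀ n : ℕ, ‖c^(n+1) * r^((n+1)^2)‖ / ‖c^n * r^(n^2)‖ = (c*r) * (r^2)^n := by
      intro n
      rw [Real.norm_of_nonneg (by positivity), Real.norm_of_nonneg (by positivity),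
        show (n+1)^2 = n^2 + (2*n+1) by ring, pow_add, pow_succ c,
        show (2*n+1) = 2*n + 1 from rfl, pow_add, ← pow_mul]
      have hcn : c^n ≠ 0 := by positivity
      have hrn : r^(n^2) ≠ 0 := by positivity
      field_simp
      ring
    have h0 : Tendsto (fun n : ℕ => (c*r) * (r^2)^n) atTop (𝓝 0) := by
      have := (tendsto_pow_atTop_nhds_zero_of_lt_one (by positivity : (0:ℝ) ≤ r^2)
        (by nlinarith : r^2 < 1)).const_mul (c*r)
      simpa using this
    exact Tendsto.congr (fun n => (hre n).symm) h0

lemma theta_summable {q z : ℂ} (h0 : 0 < ‖q‖) (h1 : ‖q‖ < 1) (hz : z ≠ 0) :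
    Summable (fun n : ℤ => ‖z ^ n * q ^ (n ^ 2)‖) := by
  have hzpos : 0 < ‖z‖ := norm_pos_iff.2 hz
  have hzipos : 0 < ‖z⁻¹‖ := norm_pos_iff.2 (inv_ne_zero hz)
  refine Summable.of_nat_of_neg ?_ ?_
  · refine ((aux_summable hzpos h0 h1).congr (fun n => ?_)).of_norm
    rw [Real.norm_of_nonneg (norm_nonneg _), norm_mul,
      show ((n:ℤ))^2 = ((n^2 : ℕ) : ℤ) by push_cast; ring,
      zpow_natCast, zpow_natCast, norm_pow, norm_pow]
  · refine ((aux_summable hzipos h0 h1).congr (fun n => ?_)).of_norm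
    rw [Real.norm_of_nonneg (norm_nonneg _), norm_mul,
      show (-(n:ℤ))^2 = ((n^2 : ℕ) : ℤ) by push_cast; ring,
      zpow_natCast, norm_pow, zpow_neg, ← inv_zpow, zpow_natCast, norm_pow]

lemma three_norm (a b c : ℂ) :
    ‖(1+a)*(1+b)*(1+c) - 1‖ ≤ (1+‖a‖)*(1+‖b‖)*(1+‖c‖) - 1 := by
  have h := prod_one_add_sub_one_norm (Finset.univ : Finset (Fin 3)) ![a,b,c]
  simpa [Fin.prod_univ_three] using h

lemma jtp_multipliable {q z : ℂ} (h0 : 0 < ‖q‖) (h1 : ‖q‖ < 1) (hz : z ≠ 0) :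
    Multipliable (fun n : ℕ =>
      (1 + z * q ^ (2 * n + 1)) * (1 + z⁻¹ * q ^ (2 * n + 1)) * (1 - q ^ (2 * (n + 1)))) := by
  set f : ℕ → ℂ := fun n =>
    (1 + z * q ^ (2 * n + 1)) * (1 + z⁻¹ * q ^ (2 * n + 1)) * (1 - q ^ (2 * (n + 1))) with hf
  by_cases hzero : ∃ j, f j = 0
  · obtain ⟨j₀, hj₀⟩ := hzero
    refine ⟨0, ?_⟩
    have hev : (fun s : Finset ℕ => ∏ i ∈ s, f i) =ᶠ[atTop] (fun _ => (0:ℂ)) := by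
      filter_upwards [eventually_ge_atTop ({j₀} : Finset ℕ)] with s hs
      exact Finset.prod_eq_zero (hs (Finset.mem_singleton_self j₀)) hj₀
    exact (tendsto_congr' hev).mpr tendsto_const_nhds
  · push_neg at hzero
    set M : ℝ := max (max ‖z‖ ‖z⁻¹‖) 1 with hM
    have hM1 : (1:ℝ) ≤ M := le_max_right _ _
    have hMz : ‖z‖ ≤ M := le_trans (le_max_left _ _) (le_max_left _ _)
    have hMzi : ‖z⁻¹‖ ≤ M := le_trans (le_max_right _ _) (le_max_left _ _)
    set CM : ℝ := 3*M + 3*M^2 + M^3 with hCM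
    have hkey : ∀ j : ℕ, ‖f j - 1‖ ≤ CM * ‖q‖^(j+1) := by
      intro j
      set x : ℝ := ‖q‖^(j+1) with hx
      have hx0 : 0 ≤ x := by positivity
      have hx1 : x ≤ 1 := pow_le_one₀ (norm_nonneg q) h1.le
      have hpa : ‖q‖^(2*j+1) ≤ x := pow_le_pow_of_le_one (norm_nonneg q) h1.le (by omega)
      have hpc : ‖q‖^(2*(j+1)) ≤ x := pow_le_pow_of_le_one (norm_nonneg q) h1.le (by omega)
      set a := z * q ^ (2 * j + 1)
      set b := z⁻¹ * q ^ (2 * j + 1)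
      set c := -(q ^ (2 * (j + 1)))
      have hfj : f j = (1+a)*(1+b)*(1+c) := by rw [hf]; simp only [sub_eq_add_neg]; rfl
      have hna : ‖a‖ ≤ M * x := by
        rw [norm_mul, norm_pow]
        exact mul_le_mul hMz hpa (by positivity) (by linarith)
      have hnb : ‖b‖ ≤ M * x := by
        rw [norm_mul, norm_pow]
        exact mul_le_mul hMzi hpa (by positivity) (by linarith)
      have hnc : ‖c‖ ≤ M * x := by
        rw [norm_neg, norm_pow]
        calc ‖q‖^(2*(j+1)) ≤ x := hpc
          _ ≤ M * x := le_mul_of_one_le_left hx0 hM1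
      have h3 := three_norm a b c
      have hna0 := norm_nonneg a
      have hnb0 := norm_nonneg b
      have hnc0 := norm_nonneg c
      have hMx0 : 0 ≤ M * x := by positivity
      have e1 : (1+‖a‖)*(1+‖b‖)*(1+‖c‖) ≤ (1+M*x)*(1+M*x)*(1+M*x) := by
        have f1 : (1+‖a‖) ≤ (1+M*x) := by linarith
        have f2 : (1+‖b‖) ≤ (1+M*x) := by linarith
        have f3 : (1+‖c‖) ≤ (1+M*x) := by linarith
        have g1 : (1+‖a‖)*(1+‖b‖) ≤ (1+M*x)*(1+M*x) :=
          mul_le_mul f1 f2 (by linarith) (by linarith)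
        exact mul_le_mul g1 f3 (by linarith) (by positivity)
      have e2 : (1+M*x)*(1+M*x)*(1+M*x) - 1 ≤ CM * x := by
        have hx2 : x*x ≤ x := by nlinarith
        have hx3 : x*(x*x) ≤ x := by nlinarith
        have k2 : M^2*(x*x) ≤ M^2*x := mul_le_mul_of_nonneg_left hx2 (by positivity)
        have k3 : M^3*(x*(x*x)) ≤ M^3*x := mul_le_mul_of_nonneg_left hx3 (by positivity)
        rw [hCM, show (3*M+3*M^2+M^3)*x = 3*(M*x)+3*(M^2*x)+M^3*x from by ring,
          show (1+M*x)*(1+M*x)*(1+M*x) - 1 = 3*(M*x) + 3*(M^2*(x*x)) + M^3*(x*(x*x)) from by ring]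
        linarith [k2, k3]
      rw [hfj]
      linarith
    have hsum : Summable (fun j : ℕ => Complex.log (f j)) := by
      refine Summable.of_norm_bounded_eventually (g := fun j => (3/2 : ℝ) * (CM * ‖q‖^(j+1)))
        (((summable_pow_succ h1).mul_left CM).mul_left _) ?_
      rw [Nat.cofinite_eq_atTop]
      have htend : Tendsto (fun j : ℕ => CM * ‖q‖^(j+1)) atTop (𝓝 0) := by
        have hg : Tendsto (fun j : ℕ => ‖q‖^(j+1)) atTop (𝓝 0) :=
          (tendsto_pow_atTop_nhds_zero_of_lt_one (norm_nonneg q) h1).comp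
            (tendsto_atTop_atTop.2 (fun b => ⟨b, fun a ha => by omega⟩))
        have := hg.const_mul CM
        simpa using this
      filter_upwards [htend.eventually_le_const (by norm_num : (0:ℝ) < 1/2)] with j hj
      show ‖Complex.log (f j)‖ ≤ 3/2 * (CM * ‖q‖ ^ (j+1))
      have hhalf : ‖f j - 1‖ ≤ 1/2 := (hkey j).trans hj
      have hlog := Complex.norm_log_one_add_half_le_self hhalf
      rw [show (1:ℂ) + (f j - 1) = f j by ring] at hlog
      exact hlog.trans (mul_le_mul_of_nonneg_left (hkey j) (by norm_num))
    have hp := hsum.hasSum.cexp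
    have hfe : (Complex.exp ∘ fun j => Complex.log (f j)) = f :=
      funext fun j => Complex.exp_log (hzero j)
    rw [hfe] at hp
    exact ⟨_, hp⟩

lemma jtp_main {q z : ℂ} (h0 : 0 < ‖q‖) (h1 : ‖q‖ < 1) (hz : z ≠ 0) :
    ∑' n : ℤ, z ^ n * q ^ (n ^ 2)
      = ∏' n : ℕ,
          (1 + z * q ^ (2 * n + 1)) * (1 + z⁻¹ * q ^ (2 * n + 1)) *
            (1 - q ^ (2 * (n + 1))) := by
  classical
  have hq : q ≠ 0 := norm_pos_iff.mp h0
  have ht : ‖q^2‖ < 1 := by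
    rw [norm_pow]
    exact pow_lt_one₀ (norm_nonneg q) h1 two_ne_zero
  set t : ℂ := q^2 with htdef
  set f : ℕ → ℂ := fun n =>
    (1 + z * q ^ (2 * n + 1)) * (1 + z⁻¹ * q ^ (2 * n + 1)) * (1 - q ^ (2 * (n + 1))) with hf
  have hMul := jtp_multipliable h0 h1 hz
  have hPP : Tendsto (fun N => ∏ j ∈ Finset.range N, f j) atTop (𝓝 (∏' n, f n)) :=
    hMul.hasProd.tendsto_prod_nat
  set F : ℕ → ℤ → ℂ := fun N m =>
    if m ∈ Finset.Icc (-(N:ℤ)) (N:ℤ)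
    then (gD t N * gB t (2*N) ((m + (N:ℤ)).toNat)) * q ^ (m^2) * z ^ m else 0 with hF
  have hbound_sum : Summable (fun m : ℤ => Kbd t * ‖z ^ m * q ^ (m^2)‖) :=
    (theta_summable h0 h1 hz).mul_left _
  have hpt : ∀ m : ℤ, Tendsto (fun N => F N m) atTop (𝓝 (z ^ m * q ^ (m^2))) := by
    intro m
    have h1' := ((coef_tendsto ht m).mul_const ((q:ℂ) ^ (m^2))).mul_const ((z:ℂ) ^ m)
    rw [one_mul] at h1'
    have h2 : Tendsto (fun N : ℕ => gD t N * gB t (2*N) ((m + (N:ℤ)).toNat) * q ^ (m^2) * z ^ m)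
        atTop (𝓝 (z ^ m * q ^ (m^2))) := by
      rw [mul_comm ((z:ℂ)^m) (q ^ (m^2))]
      exact h1'
    refine h2.congr' ?_
    filter_upwards [eventually_ge_atTop m.natAbs] with N hN
    rw [hF]
    have hmem : m ∈ Finset.Icc (-(N:ℤ)) (N:ℤ) := Finset.mem_Icc.mpr ⟨by omega, by omega⟩
    simp only [if_pos hmem]
  have hbd : ∀ᶠ N : ℕ in atTop, ∀ m : ℤ, ‖F N m‖ ≤ Kbd t * ‖z ^ m * q ^ (m^2)‖ := by
    filter_upwards with N m
    by_cases hm : m ∈ Finset.Icc (-(N:ℤ)) (N:ℤ)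
    · rw [hF]
      simp only [if_pos hm]
      have hmm := Finset.mem_Icc.mp hm
      have hk : (m + (N:ℤ)).toNat ≤ 2*N := by omega
      rw [mul_assoc, show (q:ℂ) ^ (m^2) * z ^ m = z ^ m * q ^ (m^2) from mul_comm _ _, norm_mul]
      exact mul_le_mul_of_nonneg_right (coef_bound ht hk) (norm_nonneg _)
    · rw [hF]
      simp only [if_neg hm, norm_zero]
      exact mul_nonneg (Kbd_nonneg t) (norm_nonneg _)
  have hDC := tendsto_tsum_of_dominated_convergence hbound_sum hpt hbd
  have hfin_eq : ∀ N : ℕ, (∑' m : ℤ, F N m) = ∏ j ∈ Finset.range N, f j := by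
    intro N
    have h1' : (∑' m : ℤ, F N m) = ∑ m ∈ Finset.Icc (-(N:ℤ)) (N:ℤ), F N m :=
      tsum_eq_sum (fun b hb => by rw [hF]; simp only [if_neg hb])
    rw [h1', hf]
    rw [main_finite q z hq hz N]
    exact Finset.sum_congr rfl (fun m hm => by rw [hF]; simp only [if_pos hm]; rfl)
  exact tendsto_nhds_unique ((tendsto_congr hfin_eq).mp hDC) hPP

end JTP

/-- The Jacobi triple product: for `0 < |q| < 1` and `z ≠ 0`,
`Σ_{n∈ℤ} z^n q^{n²} = Π_{n≥1} (1 + z q^{2n−1})(1 + z⁻¹ q^{2n−1})(1 − q^{2n})`,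
the series converging absolutely and the product converging. In particular with
`q = e^{iπτ}`, `z = e^{2πiu}` this is the product formula for the genus-one
Riemann theta function. -/
theorem jacobi_triple_product
    (q z : ℂ) (h0 : 0 < ‖q‖) (h1 : ‖q‖ < 1) (hz : z ≠ 0) :
    Summable (fun n : ℤ => ‖z ^ n * q ^ (n ^ 2)‖) ∧
    Multipliable (fun n : ℕ =>
      (1 + z * q ^ (2 * n + 1)) * (1 + z⁻¹ * q ^ (2 * n + 1)) * (1 - q ^ (2 * (n + 1)))) ∧
    ∑' n : ℤ, z ^ n * q ^ (n ^ 2)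
      = ∏' n : ℕ,
          (1 + z * q ^ (2 * n + 1)) * (1 + z⁻¹ * q ^ (2 * n + 1)) *
            (1 - q ^ (2 * (n + 1))) :=
  ⟨JTP.theta_summable h0 h1 hz, JTP.jtp_multipliable h0 h1 hz, JTP.jtp_main h0 h1 hz⟩
end

section
/- Let U ⊆ ℂ be open, z₀ ∈ U, and let f : ℂ → ℂ be holomorphic on U with f′(z₀) ≠ 0. Then the limit as z → z₀ (z ≠ z₀) of f′(z)·f′(z₀)/(f(z) − f(z₀))² − 1/(z − z₀)² exists and equals (1/6)·{f, z₀}, where {f, z} = f′′′(z)/f′(z) − (3/2)·(f′′(z)/f′(z))² is the Schwarzian derivative of f at z. -/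
open Filter Function Topology FormalMultilinearSeries

private lemma iteratedDeriv_eq_factorial_mul_coeff
    {f : ℂ → ℂ} {p : FormalMultilinearSeries ℂ ℂ ℂ} {x : ℂ}
    (h : HasFPowerSeriesAt f p x) (n : ℕ) :
    iteratedDeriv n f x = (n.factorial : ℂ) * p.coeff n := by
  obtain ⟨r, hr⟩ := h
  have h1 := hr.factorial_smul (1 : ℂ) n
  rw [iteratedDeriv_eq_iteratedFDeriv, ← h1, nsmul_eq_mul]
  rfl

/-- Schwarzian short-distance expansion. If `f` is holomorphic on
an open set `U ∋ z₀` with `f′(z₀) ≠ 0`, then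
`f′(z) f′(z₀)/(f(z) − f(z₀))² − 1/(z − z₀)² → (1/6){f, z₀}` as `z → z₀`,
where `{f,z} = f‴/f′ − (3/2)(f″/f′)²` is the Schwarzian derivative. -/
theorem schwarzian_short_distance_expansion
    (U : Set ℂ) (hU : IsOpen U) (z₀ : ℂ) (hz : z₀ ∈ U)
    (f : ℂ → ℂ) (hf : DifferentiableOn ℂ f U) (hf' : deriv f z₀ ≠ 0) :
    Filter.Tendsto
      (fun z => deriv f z * deriv f z₀ / (f z - f z₀) ^ 2 - 1 / (z - z₀) ^ 2)
      (nhdsWithin z₀ {z₀}ᶜ)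
      (nhds ((1 / 6) * (deriv (deriv (deriv f)) z₀ / deriv f z₀
        - (3 / 2) * (deriv (deriv f) z₀ / deriv f z₀) ^ 2))) := by
  have hfa : AnalyticOnNhd ℂ f U := hf.analyticOnNhd hU
  have hUz : U ∈ 𝓝 z₀ := hU.mem_nhds hz
  obtain ⟨p, hp⟩ := hfa z₀ hz
  set d1 := deriv f z₀ with hd1
  set g := dslope f z₀ with hgdef
  have hg : HasFPowerSeriesAt g p.fslope z₀ := hp.has_fpower_series_dslope_fslope
  obtain ⟨rg, hrg⟩ := hg
  have hg : HasFPowerSeriesAt g p.fslope z₀ := ⟨rg, hrg⟩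
  have hzball : z₀ ∈ EMetric.ball z₀ rg := EMetric.mem_ball_self hrg.r_pos
  have hgball : AnalyticOnNhd ℂ g (EMetric.ball z₀ rg) := hrg.analyticOnNhd
  -- values of g and its derivatives at z₀
  have hgz0 : g z₀ = d1 := dslope_same f z₀
  have hc1 : d1 = p.coeff 1 := by
    have := iteratedDeriv_eq_factorial_mul_coeff hp 1
    simpa [iteratedDeriv_one] using this
  have hc2 : deriv (deriv f) z₀ = 2 * p.coeff 2 := by
    have := iteratedDeriv_eq_factorial_mul_coeff hp 2
    rw [show (2 : ℕ) = 1 + 1 from rfl, iteratedDeriv_succ, iteratedDeriv_one] at this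
    simpa using this
  have hc3 : deriv (deriv (deriv f)) z₀ = 6 * p.coeff 3 := by
    have := iteratedDeriv_eq_factorial_mul_coeff hp 3
    rw [show (3 : ℕ) = 1 + 1 + 1 from rfl, iteratedDeriv_succ, iteratedDeriv_succ,
      iteratedDeriv_one] at this
    simpa [Nat.factorial] using this
  have hgd : deriv g z₀ = p.coeff 2 := by
    have := iteratedDeriv_eq_factorial_mul_coeff hg 1
    simpa [iteratedDeriv_one, coeff_fslope] using this
  have hgdd : deriv (deriv g) z₀ = 2 * p.coeff 3 := by
    have := iteratedDeriv_eq_factorial_mul_coeff hg 2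
    rw [show (2 : ℕ) = 1 + 1 from rfl, iteratedDeriv_succ, iteratedDeriv_one] at this
    simpa [coeff_fslope] using this
  -- the auxiliary analytic function N
  set N : ℂ → ℂ := fun z => deriv f z * d1 - g z ^ 2 with hNdef
  have hNa : AnalyticAt ℂ N z₀ :=
    ((hfa.deriv z₀ hz).mul analyticAt_const).sub ((hgball z₀ hzball).pow 2)
  obtain ⟨r, hr⟩ := hNa
  set N1 : ℂ → ℂ := dslope N z₀ with hN1def
  set N2 : ℂ → ℂ := dslope N1 z₀ with hN2def
  have hN1 : HasFPowerSeriesAt N1 r.fslope z₀ := hr.has_fpower_series_dslope_fslope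
  have hN2 : HasFPowerSeriesAt N2 r.fslope.fslope z₀ := hN1.has_fpower_series_dslope_fslope
  -- value of N2 at z₀
  have hN2z0 : N2 z₀ = r.coeff 2 := by
    have := iteratedDeriv_eq_factorial_mul_coeff hN2 0
    simpa [iteratedDeriv_zero, coeff_fslope] using this
  have hrc2 : 2 * r.coeff 2 = deriv (deriv N) z₀ := by
    have := iteratedDeriv_eq_factorial_mul_coeff hr 2
    rw [show (2 : ℕ) = 1 + 1 from rfl, iteratedDeriv_succ, iteratedDeriv_one] at this
    rw [this]; norm_num [Nat.factorial]
  -- compute deriv N near z₀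
  have hev : ∀ᶠ z in 𝓝 z₀,
      deriv N z = deriv (deriv f) z * d1 - 2 * g z * deriv g z := by
    filter_upwards [hUz, EMetric.isOpen_ball.mem_nhds hzball] with z hz1 hz2
    have h1 : HasDerivAt (deriv f) (deriv (deriv f) z) z :=
      (hfa.deriv z hz1).differentiableAt.hasDerivAt
    have h2 : HasDerivAt g (deriv g z) z :=
      (hgball z hz2).differentiableAt.hasDerivAt
    have h3 : HasDerivAt N (deriv (deriv f) z * d1 - 2 * g z * deriv g z) z := by
      have := (h1.mul_const d1).sub (h2.pow 2)
      exact this.congr_deriv (by push_cast; ring)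
    exact h3.deriv
  have hddN : deriv (deriv N) z₀
      = deriv (fun z => deriv (deriv f) z * d1 - 2 * g z * deriv g z) z₀ :=
    Filter.EventuallyEq.deriv_eq hev
  have hddN2 : deriv (deriv N) z₀ = 2 * p.coeff 1 * p.coeff 3 - 2 * p.coeff 2 ^ 2 := by
    rw [hddN]
    have h1 : HasDerivAt (deriv (deriv f)) (deriv (deriv (deriv f)) z₀) z₀ :=
      ((hfa.deriv.deriv) z₀ hz).differentiableAt.hasDerivAt
    have h2 : HasDerivAt g (deriv g z₀) z₀ :=
      (hgball z₀ hzball).differentiableAt.hasDerivAt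
    have h3 : HasDerivAt (deriv g) (deriv (deriv g) z₀) z₀ :=
      ((hgball.deriv) z₀ hzball).differentiableAt.hasDerivAt
    have h4 : HasDerivAt (fun z => deriv (deriv f) z * d1 - 2 * g z * deriv g z)
        (deriv (deriv (deriv f)) z₀ * d1
          - ((2 * deriv g z₀) * deriv g z₀ + (2 * g z₀) * deriv (deriv g) z₀)) z₀ :=
      (h1.mul_const d1).sub ((h2.const_mul 2).mul h3)
    rw [h4.deriv, hc3, hgz0, hgd, hgdd, hc1]
    ring
  have hN2val : N2 z₀ = p.coeff 1 * p.coeff 3 - p.coeff 2 ^ 2 := by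
    rw [hN2z0]
    have h2e : (2 : ℂ) * r.coeff 2 = 2 * (p.coeff 1 * p.coeff 3 - p.coeff 2 ^ 2) := by
      rw [hrc2, hddN2]; ring
    exact mul_left_cancel₀ two_ne_zero h2e
  -- eventual nonvanishing of g
  have hgne : ∀ᶠ z in 𝓝 z₀, g z ≠ 0 :=
    hg.continuousAt.eventually_ne (by rw [hgz0]; exact hf')
  -- the limit of N2 / g ^ 2
  have htend : Filter.Tendsto (fun z => N2 z / g z ^ 2) (𝓝[≠] z₀)
      (𝓝 (N2 z₀ / g z₀ ^ 2)) := by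
    have hcont : ContinuousAt (fun z => N2 z / g z ^ 2) z₀ :=
      hN2.continuousAt.div (hg.continuousAt.pow 2)
        (by rw [hgz0]; exact pow_ne_zero 2 hf')
    exact hcont.tendsto.mono_left nhdsWithin_le_nhds
  -- identify the expression with N2 / g ^ 2 on the punctured neighborhood
  have heq : (fun z => N2 z / g z ^ 2)
      =ᶠ[𝓝[≠] z₀] fun z => deriv f z * d1 / (f z - f z₀) ^ 2 - 1 / (z - z₀) ^ 2 := by
    filter_upwards [hgne.filter_mono nhdsWithin_le_nhds, self_mem_nhdsWithin]
      with z hgz hzz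
    have hzne : z - z₀ ≠ 0 := sub_ne_zero.mpr hzz
    have e1 : f z - f z₀ = (z - z₀) * g z := by
      have h := sub_smul_dslope f z₀ z
      rw [smul_eq_mul] at h
      exact h.symm
    have hNz0 : N z₀ = 0 := by
      show deriv f z₀ * d1 - g z₀ ^ 2 = 0
      rw [hgz0, ← hd1]; ring
    have hN1z0 : N1 z₀ = 0 := by
      rw [hN1def, dslope_same]
      rw [hev.self_of_nhds, hc2, hgz0, hgd, hc1]; ring
    have e2 : N z = (z - z₀) * N1 z := by
      have h := sub_smul_dslope N z₀ z
      rw [hNz0, sub_zero, smul_eq_mul] at h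
      exact h.symm
    have e3 : N1 z = (z - z₀) * N2 z := by
      have h := sub_smul_dslope N1 z₀ z
      rw [hN1z0, sub_zero, smul_eq_mul] at h
      exact h.symm
    have e4 : deriv f z * d1 = (z - z₀) ^ 2 * N2 z + g z ^ 2 := by
      have e5 : N z = (z - z₀) ^ 2 * N2 z := by rw [e2, e3]; ring
      have e6 : deriv f z * d1 - g z ^ 2 = (z - z₀) ^ 2 * N2 z := by
        rw [← e5]
      linear_combination e6
    rw [e1, e4]
    field_simp
    ring
  have hmain := htend.congr' heq
  have hval : N2 z₀ / g z₀ ^ 2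
      = (1 / 6) * (deriv (deriv (deriv f)) z₀ / d1
        - (3 / 2) * (deriv (deriv f) z₀ / d1) ^ 2) := by
    rw [hN2val, hgz0, hc3, hc2, hc1]
    have h1 : p.coeff 1 ≠ 0 := by rw [← hc1]; exact hf'
    field_simp [h1]
    ring
  rwa [hval] at hmain
end

section
/- For k ∈ (0,1), let K(k) = ∫₀¹ dx/√((1−x²)(1−k²x²)) and E(k) = ∫₀¹ √((1−k²x²)/(1−x²)) dx (convergent improper integrals). Then the function k ↦ K(k) is differentiable on (0,1) and dK/dk = E(k)/(k(1−k²)) − K(k)/k. -/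
open MeasureTheory Set

lemma aux_sqrt_int : IntervalIntegrable (fun x : ℝ => (Real.sqrt (1 - x))⁻¹) volume 0 1 := by
  have h : IntervalIntegrable (fun x : ℝ => x ^ (-(1/2) : ℝ)) volume 0 1 :=
    intervalIntegral.intervalIntegrable_rpow' (by norm_num)
  have h2 := (h.comp_sub_left 1).symm
  simp only [sub_zero, sub_self] at h2
  rw [intervalIntegrable_iff_integrableOn_Ioc_of_le (by norm_num)] at h2 ⊢
  refine h2.congr_fun (fun x hx => ?_) measurableSet_Ioc
  have h1x : (0:ℝ) ≤ 1 - x := by simp at hx; linarith [hx.2]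
  dsimp only
  rw [Real.rpow_neg h1x, ← Real.sqrt_eq_rpow]

lemma aux_int_of_bound (f : ℝ → ℝ) (C : ℝ)
    (hm : AEStronglyMeasurable f (volume.restrict (Ioc 0 1)))
    (h : ∀ x ∈ Ioo (0:ℝ) 1, |f x| ≤ C * (Real.sqrt (1 - x))⁻¹) :
    IntervalIntegrable f volume 0 1 := by
  rw [intervalIntegrable_iff_integrableOn_Ioc_of_le (by norm_num)]
  have hg : IntegrableOn (fun x : ℝ => C * (Real.sqrt (1 - x))⁻¹) (Ioc 0 1) volume := by
    rw [← intervalIntegrable_iff_integrableOn_Ioc_of_le (by norm_num)]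
    exact aux_sqrt_int.const_mul C
  refine hg.integrable.mono' hm ?_
  have h1 : ∀ᵐ x ∂(volume.restrict (Ioc (0:ℝ) 1)), x ≠ 1 := by
    refine ae_restrict_of_ae ?_
    rw [MeasureTheory.ae_iff]
    have : {x : ℝ | ¬x ≠ 1} = {1} := by ext y; simp
    rw [this, Real.volume_singleton]
  filter_upwards [ae_restrict_mem measurableSet_Ioc, h1] with x hx hx1
  rw [Real.norm_eq_abs]
  exact h x ⟨hx.1, lt_of_le_of_ne hx.2 hx1⟩

lemma aux_hasDeriv_integrand {x t : ℝ} (hx0 : 0 < x) (hx1 : x < 1) (ht0 : 0 < t) (ht1 : t < 1) :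
    HasDerivAt (fun s : ℝ => 1 / Real.sqrt ((1 - x ^ 2) * (1 - s ^ 2 * x ^ 2)))
      (t * x ^ 2 / (Real.sqrt (1 - x ^ 2) * Real.sqrt (1 - t ^ 2 * x ^ 2) ^ 3)) t := by
  have hu : 0 < 1 - x ^ 2 := by nlinarith
  have hv : 0 < 1 - t ^ 2 * x ^ 2 := by nlinarith
  have hP : 0 < (1 - x ^ 2) * (1 - t ^ 2 * x ^ 2) := mul_pos hu hv
  have h1 : HasDerivAt (fun s : ℝ => (1 - x ^ 2) * (1 - s ^ 2 * x ^ 2))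
      ((1 - x ^ 2) * (-(2 * t * x ^ 2))) t := by
    have := (((hasDerivAt_pow 2 t).mul_const (x ^ 2)).const_sub 1).const_mul (1 - x ^ 2)
    refine this.congr_deriv ?_
    norm_num
  have h2 := (Real.hasDerivAt_sqrt (ne_of_gt hP)).comp t h1
  have h3 := h2.inv (ne_of_gt (Real.sqrt_pos.2 hP))
  have heq : (fun s : ℝ => 1 / Real.sqrt ((1 - x ^ 2) * (1 - s ^ 2 * x ^ 2)))
      = fun s : ℝ => (Real.sqrt ((1 - x ^ 2) * (1 - s ^ 2 * x ^ 2)))⁻¹ := by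
    funext s; rw [one_div]
  rw [heq]
  refine h3.congr_deriv ?_
  set a := Real.sqrt (1 - x ^ 2) with ha
  set b := Real.sqrt (1 - t ^ 2 * x ^ 2) with hb
  have ha0 : 0 < a := Real.sqrt_pos.2 hu
  have hb0 : 0 < b := Real.sqrt_pos.2 hv
  have ha2 : a ^ 2 = 1 - x ^ 2 := Real.sq_sqrt hu.le
  have hb2 : b ^ 2 = 1 - t ^ 2 * x ^ 2 := Real.sq_sqrt hv.le
  have hab : Real.sqrt ((1 - x ^ 2) * (1 - t ^ 2 * x ^ 2)) = a * b := Real.sqrt_mul hu.le _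
  simp only [Function.comp_apply] at *
  rw [hab]
  field_simp
  linear_combination (-1) * ha2

lemma aux_ftc (k : ℝ) (hk0 : 0 < k) (hk1 : k < 1) :
    ∫ x in (0:ℝ)..1, ((1 - x ^ 2) * (1 - k ^ 2 * x ^ 2) - (1 - k ^ 2) * x ^ 2) /
      (Real.sqrt (1 - x ^ 2) * Real.sqrt (1 - k ^ 2 * x ^ 2) ^ 3) = 0 := by
  set G : ℝ → ℝ := fun x => x * Real.sqrt (1 - x ^ 2) / Real.sqrt (1 - k ^ 2 * x ^ 2) with hG
  have hk2 : 0 < 1 - k ^ 2 := by nlinarith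
  have key : ∫ x in (0:ℝ)..1, ((1 - x ^ 2) * (1 - k ^ 2 * x ^ 2) - (1 - k ^ 2) * x ^ 2) /
      (Real.sqrt (1 - x ^ 2) * Real.sqrt (1 - k ^ 2 * x ^ 2) ^ 3) = G 1 - G 0 := by
    apply intervalIntegral.integral_eq_sub_of_hasDeriv_right_of_le (by norm_num)
    · -- continuity of G on Icc 0 1
      apply ContinuousOn.div
      · exact (continuous_id.mul (Real.continuous_sqrt.comp
          (continuous_const.sub (continuous_pow 2)))).continuousOn
      · exact (Real.continuous_sqrt.comp
          (continuous_const.sub (continuous_const.mul (continuous_pow 2)))).continuousOn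
      · intro x hx
        have h2 : x ^ 2 ≤ 1 := by nlinarith [hx.1, hx.2]
        have : 0 < 1 - k ^ 2 * x ^ 2 := by nlinarith [sq_nonneg k]
        exact (Real.sqrt_pos.2 this).ne'
    · -- derivative on Ioo
      intro x hx
      obtain ⟨hx0, hx1⟩ := hx
      have hu : 0 < 1 - x ^ 2 := by nlinarith
      have hv : 0 < 1 - k ^ 2 * x ^ 2 := by nlinarith [sq_nonneg k, sq_nonneg (k*x)]
      have hsu := (Real.hasDerivAt_sqrt hu.ne').comp x
        (((hasDerivAt_pow 2 x).const_sub 1) : HasDerivAt (fun y : ℝ => 1 - y ^ 2) (-(2 * x ^ 1)) x)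
      have hnum := (hasDerivAt_id x).mul hsu
      have hsv := (Real.hasDerivAt_sqrt hv.ne').comp x
        ((((hasDerivAt_pow 2 x).const_mul (k ^ 2)).const_sub 1) :
          HasDerivAt (fun y : ℝ => 1 - k ^ 2 * y ^ 2) (-(k ^ 2 * (2 * x ^ 1))) x)
      have hGd := hnum.div hsv (Real.sqrt_pos.2 hv).ne'
      simp only [Function.comp_apply, id_eq, pow_one] at hGd
      refine HasDerivAt.hasDerivWithinAt ?_
      refine hGd.congr_deriv ?_
      simp only [Pi.mul_apply, Function.comp_apply, id_eq, Nat.cast_ofNat, Nat.add_one_sub_one, pow_one]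
      set a := Real.sqrt (1 - x ^ 2) with ha
      set b := Real.sqrt (1 - k ^ 2 * x ^ 2) with hb
      have ha0 : 0 < a := Real.sqrt_pos.2 hu
      have hb0 : 0 < b := Real.sqrt_pos.2 hv
      have ha2 : a ^ 2 = 1 - x ^ 2 := Real.sq_sqrt hu.le
      have hb2 : b ^ 2 = 1 - k ^ 2 * x ^ 2 := Real.sq_sqrt hv.le
      clear_value a b
      field_simp
      linear_combination (b^2 + x^2*k^2) * ha2 + (1 - 2*x^2) * hb2
    · -- integrability
      apply aux_int_of_bound _ (2 * (Real.sqrt (1 - k ^ 2) ^ 3)⁻¹)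
      · apply Measurable.aestronglyMeasurable
        fun_prop
      · intro x hx
        obtain ⟨hx0, hx1⟩ := hx
        have hu : 0 < 1 - x ^ 2 := by nlinarith
        have hv : 0 < 1 - k ^ 2 * x ^ 2 := by nlinarith [sq_nonneg k, sq_nonneg (k*x)]
        have hden : Real.sqrt (1 - x) * Real.sqrt (1 - k ^ 2) ^ 3
            ≤ Real.sqrt (1 - x ^ 2) * Real.sqrt (1 - k ^ 2 * x ^ 2) ^ 3 := by
          apply mul_le_mul
          · exact Real.sqrt_le_sqrt (by nlinarith)
          · exact pow_le_pow_left₀ (Real.sqrt_nonneg _)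
              (Real.sqrt_le_sqrt (by nlinarith [sq_nonneg k])) 3
          · positivity
          · positivity
        have hdenpos : 0 < Real.sqrt (1 - x) * Real.sqrt (1 - k ^ 2) ^ 3 := by
          have : (0:ℝ) < 1 - x := by linarith
          positivity
        have hnum : |(1 - x ^ 2) * (1 - k ^ 2 * x ^ 2) - (1 - k ^ 2) * x ^ 2| ≤ 2 := by
          rw [abs_le]
          constructor <;> nlinarith [sq_nonneg x, sq_nonneg (k*x), sq_nonneg k]
        have hrhs : 2 * (Real.sqrt (1 - k ^ 2) ^ 3)⁻¹ * (Real.sqrt (1 - x))⁻¹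
            = 2 / (Real.sqrt (1 - x) * Real.sqrt (1 - k ^ 2) ^ 3) := by
          rw [div_eq_mul_inv, mul_inv]
          ring
        rw [abs_div, abs_of_pos (lt_of_lt_of_le hdenpos hden), hrhs]
        exact div_le_div₀ (by norm_num) hnum hdenpos hden
  rw [key, hG]
  norm_num

lemma aux_pointwise (k x : ℝ) (hk0 : 0 < k) (hk1 : k < 1) (hx : x ∈ Icc (0:ℝ) 1) :
    Real.sqrt ((1 - k ^ 2 * x ^ 2) / (1 - x ^ 2))
      - (1 - k ^ 2) * (1 / Real.sqrt ((1 - x ^ 2) * (1 - k ^ 2 * x ^ 2)))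
      - (k * (1 - k ^ 2)) * (k * x ^ 2 / (Real.sqrt (1 - x ^ 2) * Real.sqrt (1 - k ^ 2 * x ^ 2) ^ 3))
    = k ^ 2 * (((1 - x ^ 2) * (1 - k ^ 2 * x ^ 2) - (1 - k ^ 2) * x ^ 2) /
        (Real.sqrt (1 - x ^ 2) * Real.sqrt (1 - k ^ 2 * x ^ 2) ^ 3)) := by
  obtain ⟨hx0, hx1'⟩ := hx
  rcases eq_or_lt_of_le hx1' with h1 | hx1
  · subst h1
    norm_num
  · have hu : 0 < 1 - x ^ 2 := by nlinarith
    have hv : 0 < 1 - k ^ 2 * x ^ 2 := by nlinarith [sq_nonneg k, sq_nonneg (k*x)]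
    have hdiv : Real.sqrt ((1 - k ^ 2 * x ^ 2) / (1 - x ^ 2))
        = Real.sqrt (1 - k ^ 2 * x ^ 2) / Real.sqrt (1 - x ^ 2) := Real.sqrt_div hv.le _
    have hmul : Real.sqrt ((1 - x ^ 2) * (1 - k ^ 2 * x ^ 2))
        = Real.sqrt (1 - x ^ 2) * Real.sqrt (1 - k ^ 2 * x ^ 2) := Real.sqrt_mul hu.le _
    rw [hdiv, hmul]
    set a := Real.sqrt (1 - x ^ 2) with ha
    set b := Real.sqrt (1 - k ^ 2 * x ^ 2) with hb
    have ha0 : 0 < a := Real.sqrt_pos.2 hu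
    have hb0 : 0 < b := Real.sqrt_pos.2 hv
    have ha2 : a ^ 2 = 1 - x ^ 2 := Real.sq_sqrt hu.le
    have hb2 : b ^ 2 = 1 - k ^ 2 * x ^ 2 := Real.sq_sqrt hv.le
    clear_value a b
    field_simp
    rw [← ha2, ← hb2]
    linear_combination b^2 * hb2 - (k^2*b^2) * ha2

set_option maxHeartbeats 2000000 in
/-- Derivative of the complete elliptic integral of the first kind:
for `k ∈ (0,1)`, `dK/dk = E(k)/(k(1−k²)) − K(k)/k`. -/
theorem deriv_complete_elliptic_K
    (K E : ℝ → ℝ)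
    (hK : ∀ k : ℝ, K k = ∫ x in (0:ℝ)..1, 1 / Real.sqrt ((1 - x ^ 2) * (1 - k ^ 2 * x ^ 2)))
    (hE : ∀ k : ℝ, E k = ∫ x in (0:ℝ)..1, Real.sqrt ((1 - k ^ 2 * x ^ 2) / (1 - x ^ 2))) :
    ∀ k : ℝ, 0 < k → k < 1 →
      HasDerivAt K (E k / (k * (1 - k ^ 2)) - K k / k) k := by
  intro k hk0 hk1
  have hk2 : 0 < 1 - k ^ 2 := by nlinarith
  obtain ⟨m, hm⟩ : ∃ m : ℝ, m = (1 + k) / 2 := ⟨_, rfl⟩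
  have hm1 : m < 1 := by rw [hm]; linarith
  have hm0 : 0 < m := by rw [hm]; linarith
  have hm2 : 0 < 1 - m ^ 2 := by nlinarith
  obtain ⟨ε, hε⟩ : ∃ e : ℝ, e = min (k / 2) ((1 - k) / 2) := ⟨_, rfl⟩
  have hε0 : 0 < ε := by
    rw [hε]
    exact lt_min (by linarith) (by linarith)
  have hball : ∀ t ∈ Metric.ball k ε, 0 < t ∧ t ≤ m := by
    intro t ht
    rw [Metric.mem_ball, Real.dist_eq, abs_lt, hε] at ht
    constructor
    · have := min_le_left (k / 2) ((1 - k) / 2)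
      linarith [ht.1]
    · have := min_le_right (k / 2) ((1 - k) / 2)
      rw [hm]; linarith [ht.2]
  -- a.e. x ≠ 1
  have hne1 : ∀ᵐ x : ℝ ∂volume, x ≠ 1 := by
    rw [MeasureTheory.ae_iff]
    have : {x : ℝ | ¬x ≠ 1} = {1} := by ext y; simp
    rw [this, Real.volume_singleton]
  have hf_int : IntervalIntegrable
      (fun x : ℝ => 1 / Real.sqrt ((1 - x ^ 2) * (1 - k ^ 2 * x ^ 2))) volume 0 1 := by
    apply aux_int_of_bound _ ((Real.sqrt (1 - k ^ 2))⁻¹)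
    · exact (Measurable.aestronglyMeasurable (by fun_prop))
    · intro x hx
      obtain ⟨hx0, hx1⟩ := hx
      have hu : 0 < 1 - x ^ 2 := by nlinarith
      have hv : 0 < 1 - k ^ 2 * x ^ 2 := by nlinarith [sq_nonneg k, sq_nonneg (k*x)]
      have hle : Real.sqrt (1 - x) * Real.sqrt (1 - k ^ 2)
          ≤ Real.sqrt ((1 - x ^ 2) * (1 - k ^ 2 * x ^ 2)) := by
        rw [Real.sqrt_mul hu.le]
        apply mul_le_mul (Real.sqrt_le_sqrt (by nlinarith))
          (Real.sqrt_le_sqrt (by nlinarith [sq_nonneg k])) (Real.sqrt_nonneg _)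
          (Real.sqrt_nonneg _)
      have hpos : 0 < Real.sqrt (1 - x) * Real.sqrt (1 - k ^ 2) := by
        have : (0:ℝ) < 1 - x := by linarith
        positivity
      rw [abs_of_nonneg (by positivity), one_div]
      calc (Real.sqrt ((1 - x ^ 2) * (1 - k ^ 2 * x ^ 2)))⁻¹
          ≤ (Real.sqrt (1 - x) * Real.sqrt (1 - k ^ 2))⁻¹ :=
            inv_anti₀ hpos hle
        _ = (Real.sqrt (1 - k ^ 2))⁻¹ * (Real.sqrt (1 - x))⁻¹ := by
            rw [mul_inv]; ring
  -- differentiation under the integral sign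
  have main := intervalIntegral.hasDerivAt_integral_of_dominated_loc_of_deriv_le
    (F := fun t x => 1 / Real.sqrt ((1 - x ^ 2) * (1 - t ^ 2 * x ^ 2)))
    (F' := fun t x => t * x ^ 2 / (Real.sqrt (1 - x ^ 2) * Real.sqrt (1 - t ^ 2 * x ^ 2) ^ 3))
    (bound := fun x => (Real.sqrt (1 - m ^ 2) ^ 3)⁻¹ * (Real.sqrt (1 - x))⁻¹)
    (μ := volume) (a := 0) (b := 1) (x₀ := k) (Metric.ball_mem_nhds k hε0)
    ?_ ?_ ?_ ?_ ?_ ?_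
  · obtain ⟨hD_int, hKd⟩ := main
    set D : ℝ := ∫ x in (0:ℝ)..1, k * x ^ 2 /
      (Real.sqrt (1 - x ^ 2) * Real.sqrt (1 - k ^ 2 * x ^ 2) ^ 3) with hD
    -- integrability of the three integrands
    have he_int : IntervalIntegrable
        (fun x : ℝ => Real.sqrt ((1 - k ^ 2 * x ^ 2) / (1 - x ^ 2))) volume 0 1 := by
      apply aux_int_of_bound _ 1
      · exact (Measurable.aestronglyMeasurable (by fun_prop))
      · intro x hx
        obtain ⟨hx0, hx1⟩ := hx
        have hu : 0 < 1 - x ^ 2 := by nlinarith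
        have hv : 0 < 1 - k ^ 2 * x ^ 2 := by nlinarith [sq_nonneg k, sq_nonneg (k*x)]
        have hx' : (0:ℝ) < 1 - x := by linarith
        rw [abs_of_nonneg (Real.sqrt_nonneg _), one_mul]
        calc Real.sqrt ((1 - k ^ 2 * x ^ 2) / (1 - x ^ 2))
            ≤ Real.sqrt ((1 - x)⁻¹) := by
              apply Real.sqrt_le_sqrt
              rw [div_le_iff₀ hu, ← one_div, div_mul_eq_mul_div, le_div_iff₀ hx']
              nlinarith [sq_nonneg k, sq_nonneg (k*x)]
          _ = (Real.sqrt (1 - x))⁻¹ := Real.sqrt_inv _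
    -- combine the integrals
    have hcomb : E k - (1 - k ^ 2) * K k - (k * (1 - k ^ 2)) * D = 0 := by
      rw [hK, hE, hD]
      rw [← intervalIntegral.integral_const_mul, ← intervalIntegral.integral_const_mul,
        ← intervalIntegral.integral_sub he_int (hf_int.const_mul _),
        ← intervalIntegral.integral_sub (he_int.sub (hf_int.const_mul _)) (hD_int.const_mul _)]
      have : (∫ x in (0:ℝ)..1,
          (Real.sqrt ((1 - k ^ 2 * x ^ 2) / (1 - x ^ 2))
            - (1 - k ^ 2) * (1 / Real.sqrt ((1 - x ^ 2) * (1 - k ^ 2 * x ^ 2)))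
            - (k * (1 - k ^ 2)) * (k * x ^ 2 /
                (Real.sqrt (1 - x ^ 2) * Real.sqrt (1 - k ^ 2 * x ^ 2) ^ 3))))
          = ∫ x in (0:ℝ)..1, k ^ 2 * (((1 - x ^ 2) * (1 - k ^ 2 * x ^ 2) - (1 - k ^ 2) * x ^ 2) /
              (Real.sqrt (1 - x ^ 2) * Real.sqrt (1 - k ^ 2 * x ^ 2) ^ 3)) := by
        apply intervalIntegral.integral_congr
        intro x hx
        rw [uIcc_of_le (by norm_num : (0:ℝ) ≤ 1)] at hx
        exact aux_pointwise k x hk0 hk1 hx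
      rw [this, intervalIntegral.integral_const_mul, aux_ftc k hk0 hk1, mul_zero]
    have hDval : D = E k / (k * (1 - k ^ 2)) - K k / k := by
      have hk0' : k ≠ 0 := hk0.ne'
      have hk2' : (1 : ℝ) - k ^ 2 ≠ 0 := hk2.ne'
      field_simp
      linear_combination (-1) * hcomb
    have hKfun : K = fun t : ℝ => ∫ x in (0:ℝ)..1,
        1 / Real.sqrt ((1 - x ^ 2) * (1 - t ^ 2 * x ^ 2)) := funext hK
    rw [← hDval, hKfun]
    exact hKd
  · -- hF_meas
    exact Filter.Eventually.of_forall fun t => (Measurable.aestronglyMeasurable (by fun_prop))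
  · -- hF_int at k
    exact hf_int
  · -- hF'_meas
    exact (Measurable.aestronglyMeasurable (by fun_prop))
  · -- h_bound
    filter_upwards [hne1] with x hx1
    intro hx t ht
    have hxI : x ∈ Ioc (0:ℝ) 1 := by rwa [uIoc_of_le (by norm_num : (0:ℝ) ≤ 1)] at hx
    have hx0 : 0 < x := hxI.1
    have hxlt : x < 1 := lt_of_le_of_ne hxI.2 hx1
    obtain ⟨ht0, htm⟩ := hball t ht
    have hx2 : x ^ 2 ≤ 1 := by nlinarith
    have ht2 : t ^ 2 ≤ m ^ 2 := by nlinarith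
    have htx2 : t ^ 2 * x ^ 2 ≤ m ^ 2 := by nlinarith [mul_le_of_le_one_right (sq_nonneg t) hx2]
    have hu : 0 < 1 - x ^ 2 := by nlinarith
    have hv : 0 < 1 - t ^ 2 * x ^ 2 := by linarith
    have hden : Real.sqrt (1 - x) * Real.sqrt (1 - m ^ 2) ^ 3
        ≤ Real.sqrt (1 - x ^ 2) * Real.sqrt (1 - t ^ 2 * x ^ 2) ^ 3 := by
      apply mul_le_mul (Real.sqrt_le_sqrt (by nlinarith))
      · apply pow_le_pow_left₀ (Real.sqrt_nonneg _)
        exact Real.sqrt_le_sqrt (by linarith)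
      · positivity
      · positivity
    have hdenpos : 0 < Real.sqrt (1 - x) * Real.sqrt (1 - m ^ 2) ^ 3 := by
      have : (0:ℝ) < 1 - x := by linarith
      positivity
    have hnum : t * x ^ 2 ≤ 1 := by nlinarith [mul_le_of_le_one_right ht0.le hx2]
    rw [Real.norm_eq_abs, abs_of_nonneg (by positivity)]
    calc t * x ^ 2 / (Real.sqrt (1 - x ^ 2) * Real.sqrt (1 - t ^ 2 * x ^ 2) ^ 3)
        ≤ 1 / (Real.sqrt (1 - x) * Real.sqrt (1 - m ^ 2) ^ 3) :=
          div_le_div₀ (by norm_num) hnum hdenpos hden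
      _ = (Real.sqrt (1 - m ^ 2) ^ 3)⁻¹ * (Real.sqrt (1 - x))⁻¹ := by
          rw [one_div, mul_inv]; ring
  · -- bound integrable
    exact aux_sqrt_int.const_mul _
  · -- h_diff
    filter_upwards [hne1] with x hx1 hx t ht
    have hxI : x ∈ Ioc (0:ℝ) 1 := by rwa [uIoc_of_le (by norm_num : (0:ℝ) ≤ 1)] at hx
    obtain ⟨ht0, htm⟩ := hball t ht
    exact aux_hasDeriv_integrand hxI.1 (lt_of_le_of_ne hxI.2 hx1) ht0 (lt_of_le_of_lt htm hm1)
end
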